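/- One-variable Wedderburn theorem: If f₁,...,f_N are entire functions on ℂ with no common zero, then there exist entire functions g₁,...,g_N on ℂ with ∑_{j=1}^N g_j f_j = 1. -/

import Mathlib

open scoped BigOperators

open Filter Function Set Metric
open scoped Topology ENNReal NNReal

noncomputable section

/-- Universal dslope expansion. -/
lemma dslope_expansion (φ : ℂ → ℂ) (a : ℂ) (k : ℕ) (z : ℂ) :
    φ z = (∑ i ∈ Finset.range k, (swap dslope a)^[i] φ a * (z - a) ^ i)
      + (z - a) ^ k * (swap dslope a)^[k] φ z := by
  induction k with
  | zero => simp
  | succ k ih =>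
    have h : (swap dslope a)^[k] φ z
        = (swap dslope a)^[k] φ a + (z - a) * (swap dslope a)^[k + 1] φ z := by
      have h2 := sub_smul_dslope ((swap dslope a)^[k] φ) a z
      rw [iterate_succ_apply']
      simp only [swap, smul_eq_mul] at h2 ⊢
      linear_combination -h2
    rw [Finset.sum_range_succ]
    calc φ z = _ := ih
    _ = _ := by rw [h]; ring

lemma differentiable_iterate_dslope {φ : ℂ → ℂ} (hφ : Differentiable ℂ φ) (a : ℂ) (k : ℕ) :
    Differentiable ℂ ((swap dslope a)^[k] φ) := by
  induction k with
  | zero => exact hφ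
  | succ k ih =>
    rw [iterate_succ_apply']
    rw [← differentiableOn_univ] at ih ⊢
    exact (Complex.differentiableOn_dslope (univ_mem)).mpr ih

lemma analyticAt_iterate_dslope {φ : ℂ → ℂ} {a : ℂ} (hφ : AnalyticAt ℂ φ a) (k : ℕ) :
    AnalyticAt ℂ ((swap dslope a)^[k] φ) a := by
  induction k with
  | zero => exact hφ
  | succ k ih =>
    rw [iterate_succ_apply']
    obtain ⟨p, hp⟩ := ih
    exact ⟨p.fslope, hp.has_fpower_series_dslope_fslope⟩

lemma entire_analyticAt {φ : ℂ → ℂ} (hφ : Differentiable ℂ φ) (a : ℂ) : AnalyticAt ℂ φ a :=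
  hφ.differentiableOn.analyticAt univ_mem

/-- identity theorem consequence -/
lemma not_eventually_zero {φ : ℂ → ℂ} (hφ : Differentiable ℂ φ) (hne : ∃ w, φ w ≠ 0) (a : ℂ)
    (h : ∀ᶠ z in 𝓝 a, φ z = 0) : False := by
  obtain ⟨w, hw⟩ := hne
  have hA : AnalyticOnNhd ℂ φ univ := hφ.differentiableOn.analyticOnNhd isOpen_univ
  have := hA.eqOn_zero_of_preconnected_of_eventuallyEq_zero isPreconnected_univ (mem_univ a)
    (h.mono fun z hz => hz)
  exact hw (this (mem_univ w))

/-- Global factorization at a zero. -/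
lemma exists_factor {φ : ℂ → ℂ} (hφ : Differentiable ℂ φ) (hne : ∃ w, φ w ≠ 0) (a : ℂ)
    (ha : φ a = 0) :
    ∃ (n : ℕ) (v : ℂ → ℂ), 1 ≤ n ∧ Differentiable ℂ v ∧ v a ≠ 0 ∧
      ∀ z, φ z = (z - a) ^ n * v z := by
  have hex : ∃ i, (swap dslope a)^[i] φ a ≠ 0 := by
    by_contra hcon
    push_neg at hcon
    obtain ⟨p, hp⟩ := entire_analyticAt hφ a
    have hp0 : p = 0 := by
      ext1 n
      have h1 : (FormalMultilinearSeries.fslope^[n] p).coeff 0 = (swap dslope a)^[n] φ a :=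
        (hp.has_fpower_series_iterate_dslope_fslope n).coeff_zero (fun _ => 1)
      have h2 : p.coeff n = 0 := by
        have h3 : (FormalMultilinearSeries.fslope^[n] p).coeff 0 = p.coeff n := by
          rw [FormalMultilinearSeries.coeff_iterate_fslope]; simp
        rw [← h3, h1, hcon n]
      rwa [FormalMultilinearSeries.coeff_eq_zero] at h2
    rw [hp0] at hp
    exact not_eventually_zero hφ hne a (hp.locally_zero_iff.mpr rfl)
  classical
  set n := Nat.find hex with hn
  refine ⟨n, (swap dslope a)^[n] φ, ?_, differentiable_iterate_dslope hφ a n,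
    Nat.find_spec hex, fun z => ?_⟩
  · rw [Nat.one_le_iff_ne_zero]
    intro h0
    apply Nat.find_spec hex
    rw [← hn, h0]
    simpa using ha
  · have hzero : ∀ i ∈ Finset.range n, (swap dslope a)^[i] φ a * (z - a) ^ i = 0 := by
      intro i hi
      have := Nat.find_min hex (Finset.mem_range.mp hi)
      push_neg at this
      rw [this, zero_mul]
    rw [dslope_expansion φ a n z, Finset.sum_eq_zero hzero, zero_add]

/-- Taylor polynomial approximation on a smaller ball. -/
lemma taylor_approx (φ : ℂ → ℂ) {r s : ℝ} (hφ : DifferentiableOn ℂ φ (closedBall 0 r))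
    (hr : 0 < r) (hs : 0 ≤ s) (hsr : s < r) {ε : ℝ} (hε : 0 < ε) :
    ∃ T : ℂ → ℂ, Differentiable ℂ T ∧ ∀ z ∈ closedBall (0 : ℂ) s, ‖φ z - T z‖ ≤ ε := by
  lift r to NNReal using hr.le with R hR
  have hR0 : (0 : NNReal) < R := by exact_mod_cast hr
  have H := hφ.hasFPowerSeriesOnBall hR0
  have hr0 : (0:ℝ) < r := by rw [← hR]; exact_mod_cast hR0
  set r' : NNReal := ⟨(s + r) / 2, by linarith⟩ with hr'
  have hsr' : s < (r' : ℝ) := by change s < (s + r) / 2; linarith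
  have hr'R : (r' : ℝ≥0∞) < R := by
    rw [ENNReal.coe_lt_coe, ← NNReal.coe_lt_coe]
    change (s + r) / 2 < (R : ℝ); linarith
  have HT := H.tendstoUniformlyOn hr'R
  rw [Metric.tendstoUniformlyOn_iff] at HT
  obtain ⟨N, hN⟩ := (HT ε hε).exists
  refine ⟨fun z => (cauchyPowerSeries φ 0 R).partialSum N z, ?_, fun z hz => ?_⟩
  · have : (fun z : ℂ => (cauchyPowerSeries φ 0 R).partialSum N z)
        = fun z : ℂ => ∑ k ∈ Finset.range N, z ^ k • (cauchyPowerSeries φ 0 R).coeff k := by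
      funext z
      simp only [FormalMultilinearSeries.partialSum,
        FormalMultilinearSeries.apply_eq_pow_smul_coeff]
    rw [this]
    exact Differentiable.fun_sum fun k _ => (differentiable_pow k).smul_const _
  · have hz' : z ∈ ball (0 : ℂ) (r' : ℝ) := by
      rw [mem_ball_zero_iff]
      exact lt_of_le_of_lt (mem_closedBall_zero_iff.mp hz) hsr'
    have h5 := hN z hz'
    rw [dist_eq_norm] at h5
    simp only [zero_add] at h5
    simpa [norm_sub_rev] using h5.le

lemma zeros_isolated {φ : ℂ → ℂ} (hφ : Differentiable ℂ φ) (hne : ∃ w, φ w ≠ 0) (a : ℂ) :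
    ∀ᶠ z in 𝓝[≠] a, φ z ≠ 0 := by
  rcases (entire_analyticAt hφ a).eventually_eq_zero_or_eventually_ne_zero with h | h
  · exact absurd h (fun hc => not_eventually_zero hφ hne a hc)
  · exact h

lemma zeros_finite_in_compact {φ : ℂ → ℂ} (hφ : Differentiable ℂ φ) (hne : ∃ w, φ w ≠ 0)
    {K : Set ℂ} (hK : IsCompact K) : (K ∩ φ ⁻¹' {0}).Finite := by
  have hcl : IsClosed (φ ⁻¹' {0}) := isClosed_singleton.preimage hφ.continuous
  have hKc : IsCompact (K ∩ φ ⁻¹' {0}) := hK.inter_right hcl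
  refine hKc.finite ?_
  rw [isDiscrete_iff_nhdsNE]
  intro x hx
  rw [← Filter.eventually_false_iff_eq_bot]
  have h1 : ∀ᶠ z in 𝓝[≠] x ⊓ Filter.principal (K ∩ φ ⁻¹' {0}), φ z ≠ 0 :=
    (zeros_isolated hφ hne x).filter_mono inf_le_left
  have h2 : ∀ᶠ z in 𝓝[≠] x ⊓ Filter.principal (K ∩ φ ⁻¹' {0}), z ∈ K ∩ φ ⁻¹' {0} :=
    Filter.Eventually.filter_mono inf_le_right (Filter.eventually_principal.mpr fun z hz => hz)
  filter_upwards [h1, h2] with z hz1 hz2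
  exact hz1 hz2.2

lemma zeros_countable {φ : ℂ → ℂ} (hφ : Differentiable ℂ φ) (hne : ∃ w, φ w ≠ 0) :
    (φ ⁻¹' {0}).Countable := by
  have : φ ⁻¹' {0} ⊆ ⋃ n : ℕ, (closedBall (0 : ℂ) n ∩ φ ⁻¹' {0}) := by
    intro z hz
    exact mem_iUnion.mpr ⟨⌈‖z‖⌉₊, by simp [mem_closedBall_zero_iff, Nat.le_ceil], hz⟩
  exact Set.Countable.mono this (countable_iUnion fun n =>
    (zeros_finite_in_compact hφ hne (isCompact_closedBall _ _)).countable)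

set_option maxHeartbeats 1000000 in
lemma bezout_two {f h : ℂ → ℂ} (hf : Differentiable ℂ f) (hh : Differentiable ℂ h)
    (hfne : ∃ w, f w ≠ 0) (hco : ∀ a, f a = 0 → h a ≠ 0) :
    ∃ α β : ℂ → ℂ, Differentiable ℂ α ∧ Differentiable ℂ β ∧
      ∀ z, α z * f z + β z * h z = 1 := by
  classical
  have hAcnt : (f ⁻¹' {0}).Countable := zeros_countable hf hfne
  haveI : Countable ↥(f ⁻¹' {0}) := hAcnt.to_subtype
  obtain ⟨ι, hι⟩ := exists_injective_nat ↥(f ⁻¹' {0})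
  choose n v hn1 hv hva hfac using
    fun a : ↥(f ⁻¹' {0}) => exists_factor hf hfne (a : ℂ) a.2
  set W : ↥(f ⁻¹' {0}) → ℕ → (ℂ → ℂ) :=
    fun a i => (swap dslope (a : ℂ))^[i] (fun z => (v a z * h z)⁻¹) with hW
  set Q : ↥(f ⁻¹' {0}) → ℂ → ℂ :=
    fun a z => ∑ i ∈ Finset.range (n a), W a i (a : ℂ) * (z - (a : ℂ)) ^ i with hQdef
  set p : ↥(f ⁻¹' {0}) → ℂ → ℂ := fun a z => Q a z / (z - (a : ℂ)) ^ (n a) with hpdef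
  have hQdiff : ∀ a, Differentiable ℂ (Q a) := by
    intro a
    exact Differentiable.fun_sum fun i _ =>
      (differentiable_const _).mul ((differentiable_id.sub_const _).pow i)
  set u : ↥(f ⁻¹' {0}) → ℝ := fun a => (1 / 2 : ℝ) ^ (ι a) with hu
  have hupos : ∀ a, 0 < u a := fun a => by positivity
  have husum : Summable u := by
    have : Summable (fun k : ℕ => (1 / 2 : ℝ) ^ k) :=
      summable_geometric_of_lt_one (by norm_num) (by norm_num)
    exact this.comp_injective hι
  -- Taylor corrections
  have hT : ∀ a : ↥(f ⁻¹' {0}), ∃ S : ℂ → ℂ, Differentiable ℂ S ∧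
      ∀ z ∈ closedBall (0 : ℂ) (‖(a : ℂ)‖ / 2), ‖p a z - S z‖ ≤ u a := by
    intro a
    by_cases ha0 : (a : ℂ) = 0
    · refine ⟨0, differentiable_const 0, fun z hz => ?_⟩
      rw [ha0, norm_zero] at hz
      have hz0 : z = 0 := by
        have h1 := mem_closedBall_zero_iff.mp hz
        rw [← norm_le_zero_iff]
        linarith
      have hp0 : p a z = 0 := by
        simp only [hpdef, hz0, ha0, sub_zero]
        rw [zero_pow (Nat.one_le_iff_ne_zero.mp (hn1 a)), div_zero]
      rw [hp0]
      simpa using (hupos a).le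
    · have hanorm : (0 : ℝ) < ‖(a : ℂ)‖ := norm_pos_iff.mpr ha0
      have hdOn : DifferentiableOn ℂ (p a) (closedBall 0 (3 * ‖(a : ℂ)‖ / 4)) := by
        intro z hz
        have hzn : ‖z‖ ≤ 3 * ‖(a : ℂ)‖ / 4 := mem_closedBall_zero_iff.mp hz
        have hza : z ≠ (a : ℂ) := by
          intro hze; rw [hze] at hzn; linarith
        have : DifferentiableAt ℂ (p a) z := by
          simp only [hpdef]
          exact ((hQdiff a).differentiableAt).div
            (((differentiable_id.sub_const _).pow _).differentiableAt)
            (pow_ne_zero _ (sub_ne_zero.mpr hza))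
        exact this.differentiableWithinAt
      exact taylor_approx (p a) hdOn (by linarith) (by positivity) (by linarith) (hupos a)
  choose T hTdiff hTbound using hT
  have hbound : ∀ (a : ↥(f ⁻¹' {0})) (z : ℂ), 2 * ‖z‖ ≤ ‖(a : ℂ)‖ → ‖p a z - T a z‖ ≤ u a := by
    intro a z hz
    exact hTbound a z (by rw [mem_closedBall_zero_iff]; linarith)
  have hcofin : ∀ R : ℝ, {a : ↥(f ⁻¹' {0}) | ‖(a : ℂ)‖ < R}.Finite := by
    intro R
    have hfin := zeros_finite_in_compact hf hfne (isCompact_closedBall (0 : ℂ) R)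
    refine (hfin.preimage (Subtype.val_injective.injOn)).subset ?_
    intro a ha
    exact ⟨by rw [mem_closedBall_zero_iff]; exact (le_of_lt ha), a.2⟩
  set E : ↥(f ⁻¹' {0}) → ℂ → ℂ := fun a z => Q a z * v a z - T a z * f z with hE
  have hEdiff : ∀ a, Differentiable ℂ (E a) :=
    fun a => ((hQdiff a).mul (hv a)).sub ((hTdiff a).mul hf)
  have hEeq : ∀ (a : ↥(f ⁻¹' {0})) (z : ℂ), z ≠ (a : ℂ) →
      E a z = (p a z - T a z) * f z := by
    intro a z hz
    have hpow : (z - (a : ℂ)) ^ (n a) ≠ 0 := pow_ne_zero _ (sub_ne_zero.mpr hz)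
    have hQv : p a z * f z = Q a z * v a z := by
      simp only [hpdef]
      rw [hfac a z]
      field_simp
    show Q a z * v a z - T a z * f z = (p a z - T a z) * f z
    linear_combination -hQv
  set b : ℂ → ℂ := fun z => ∑' a : ↥(f ⁻¹' {0}), E a z with hb
  -- b is entire
  have hbdiff : Differentiable ℂ b := by
    intro z₀
    set R : ℝ := ‖z₀‖ + 1 with hR
    have hR0 : 0 < R := by positivity
    obtain ⟨C, hC⟩ := (isCompact_closedBall (0 : ℂ) R).exists_bound_of_continuousOn
      hf.continuous.continuousOn
    have hbnd : ∀ᶠ c in Filter.cofinite, ∀ z ∈ ball (0 : ℂ) R, ‖E c z‖ ≤ u c * C := by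
      filter_upwards [(hcofin (2 * R)).eventually_cofinite_notMem] with c hc
      intro z hzball
      have h2R : 2 * R ≤ ‖(c : ℂ)‖ := not_lt.mp hc
      have hzn : ‖z‖ < R := mem_ball_zero_iff.mp hzball
      have hzc : z ≠ (c : ℂ) := by
        intro hze; rw [hze] at hzn; linarith
      rw [hEeq c z hzc, norm_mul]
      exact mul_le_mul (hbound c z (by linarith)) (hC z (ball_subset_closedBall hzball))
        (norm_nonneg _) (hupos c).le
    have hTU := tendstoUniformlyOn_tsum_of_cofinite_eventually (husum.mul_right C) hbnd
    have hdOn : DifferentiableOn ℂ (fun z => ∑' c, E c z) (ball (0 : ℂ) R) :=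
      hTU.tendstoLocallyUniformlyOn.differentiableOn
        (Filter.Eventually.of_forall fun t =>
          DifferentiableOn.fun_sum fun c _ => (hEdiff c).differentiableOn) isOpen_ball
    exact hdOn.differentiableAt (isOpen_ball.mem_nhds (mem_ball_zero_iff.mpr (by
      rw [hR]; linarith)))
  -- local extension data
  have hloc : ∀ a : ↥(f ⁻¹' {0}), ∃ ε > 0, ∃ Φ : ℂ → ℂ,
      DifferentiableOn ℂ Φ (ball (a : ℂ) ε) ∧
      ∀ z ∈ ball (a : ℂ) ε, z ≠ (a : ℂ) → f z ≠ 0 ∧ 1 - b z * h z = Φ z * f z := by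
    intro a
    have hvh0 : v a (a : ℂ) * h (a : ℂ) ≠ 0 := mul_ne_zero (hva a) (hco (a : ℂ) a.2)
    have hGan : AnalyticAt ℂ (fun z => (v a z * h z)⁻¹) (a : ℂ) :=
      (entire_analyticAt ((hv a).mul hh) (a : ℂ)).inv hvh0
    have hWan : AnalyticAt ℂ (W a (n a)) (a : ℂ) := analyticAt_iterate_dslope hGan (n a)
    have hev1 : ∀ᶠ z in 𝓝 (a : ℂ), AnalyticAt ℂ (W a (n a)) z := hWan.eventually_analyticAt
    have hev2 : ∀ᶠ z in 𝓝 (a : ℂ), v a z * h z ≠ 0 :=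
      (((hv a).continuous.mul hh.continuous).continuousAt).eventually_ne hvh0
    have hev3 : ∀ᶠ z in 𝓝 (a : ℂ), z ≠ (a : ℂ) → f z ≠ 0 := by
      have h1 := zeros_isolated hf hfne (a : ℂ)
      rw [eventually_nhdsWithin_iff] at h1
      filter_upwards [h1] with z hz1 hz2
      exact hz1 hz2
    obtain ⟨ε₀, hε₀, hball⟩ := Metric.eventually_nhds_iff.mp ((hev1.and hev2).and hev3)
    refine ⟨min ε₀ 1, lt_min hε₀ one_pos, fun z =>
      h z * (W a (n a) z + T a z - ∑' c, if c = a then 0 else (p c z - T c z)), ?_, ?_⟩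
    · -- differentiability of Φ on the ball
      have hWdiff : DifferentiableOn ℂ (W a (n a)) (ball (a : ℂ) (min ε₀ 1)) := by
        intro z hz
        have hz' : dist z (a : ℂ) < ε₀ := lt_of_lt_of_le (mem_ball.mp hz) (min_le_left _ _)
        exact ((hball hz').1.1.differentiableAt).differentiableWithinAt
      have hterm : ∀ c, DifferentiableOn ℂ
          (fun z => if c = a then 0 else (p c z - T c z)) (ball (a : ℂ) (min ε₀ 1)) := by
        intro c
        by_cases hc : c = a
        · simp only [hc, if_pos]
          exact (differentiable_const (0 : ℂ)).differentiableOn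
        · simp only [if_neg hc]
          have hcnot : (c : ℂ) ∉ ball (a : ℂ) (min ε₀ 1) := by
            intro hcin
            have hc' : dist (c : ℂ) (a : ℂ) < ε₀ :=
              lt_of_lt_of_le (mem_ball.mp hcin) (min_le_left _ _)
            have hca : (c : ℂ) ≠ (a : ℂ) := fun hce => hc (Subtype.coe_injective hce)
            exact (hball hc').2 hca c.2
          intro z hz
          have hzc : z ≠ (c : ℂ) := fun hze => hcnot (hze ▸ hz)
          have : DifferentiableAt ℂ (fun z => p c z - T c z) z := by
            simp only [hpdef]
            have h1 := (((hQdiff c).differentiableAt (x := z)).div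
              (((differentiable_id.sub_const (c:ℂ)).pow (n c)).differentiableAt)
              (pow_ne_zero _ (sub_ne_zero.mpr hzc)))
            have h2 := h1.sub (hTdiff c).differentiableAt
            exact h2
          exact this.differentiableWithinAt
      have hbnd : ∀ᶠ c in Filter.cofinite, ∀ z ∈ ball (a : ℂ) (min ε₀ 1),
          ‖if c = a then 0 else (p c z - T c z)‖ ≤ u c := by
        filter_upwards [(hcofin (2 * (‖(a : ℂ)‖ + 1))).eventually_cofinite_notMem] with c hc
        intro z hz
        by_cases hca : c = a
        · simp only [hca, if_pos, norm_zero]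
          positivity
        · rw [if_neg hca]
          have h2 : 2 * (‖(a : ℂ)‖ + 1) ≤ ‖(c : ℂ)‖ := not_lt.mp hc
          have hzn : ‖z‖ < ‖(a : ℂ)‖ + 1 := by
            have h3 : dist z (a : ℂ) < 1 := lt_of_lt_of_le (mem_ball.mp hz) (min_le_right _ _)
            calc ‖z‖ = ‖(z - (a : ℂ)) + (a : ℂ)‖ := by ring_nf
            _ ≤ ‖z - (a : ℂ)‖ + ‖(a : ℂ)‖ := norm_add_le _ _
            _ < ‖(a : ℂ)‖ + 1 := by rw [dist_eq_norm] at h3; linarith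
          exact hbound c z (by linarith)
      have hm' : DifferentiableOn ℂ
          (fun z => ∑' c, if c = a then 0 else (p c z - T c z)) (ball (a : ℂ) (min ε₀ 1)) :=
        (tendstoUniformlyOn_tsum_of_cofinite_eventually husum
          hbnd).tendstoLocallyUniformlyOn.differentiableOn
          (Filter.Eventually.of_forall fun t =>
            DifferentiableOn.fun_sum fun c _ => hterm c) isOpen_ball
      exact hh.differentiableOn.mul
        (((hWdiff.add (hTdiff a).differentiableOn).sub hm'))
    · -- the key identity
      intro z hz hza
      have hz' : dist z (a : ℂ) < ε₀ := lt_of_lt_of_le (mem_ball.mp hz) (min_le_left _ _)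
      obtain ⟨⟨hWz, hvhz⟩, hfimp⟩ := hball hz'
      have hfz : f z ≠ 0 := hfimp hza
      refine ⟨hfz, ?_⟩
      have hznotA : ∀ c : ↥(f ⁻¹' {0}), z ≠ (c : ℂ) := by
        intro c hze
        exact hfz (by rw [hze]; exact c.2)
      -- summability
      have hsum1 : Summable (fun c : ↥(f ⁻¹' {0}) => E c z) := by
        apply Summable.of_norm_bounded_eventually (g := fun c => u c * ‖f z‖) (husum.mul_right _)
        filter_upwards [(hcofin (2 * ‖z‖ + 1)).eventually_cofinite_notMem] with c hc
        have h2 : 2 * ‖z‖ + 1 ≤ ‖(c : ℂ)‖ := not_lt.mp hc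
        rw [hEeq c z (hznotA c), norm_mul]
        exact mul_le_mul_of_nonneg_right (hbound c z (by linarith)) (norm_nonneg _)
      have hsum2 : Summable (fun c : ↥(f ⁻¹' {0}) => p c z - T c z) := by
        apply Summable.congr (hsum1.mul_right (f z)⁻¹)
        intro c
        rw [hEeq c z (hznotA c)]
        field_simp
      have hbz : b z = f z * ((p a z - T a z) +
          ∑' c, if c = a then 0 else (p c z - T c z)) := by
        have h1 : b z = ∑' c, (p c z - T c z) * f z :=
          tsum_congr fun c => hEeq c z (hznotA c)
        rw [h1, tsum_mul_right, Summable.tsum_eq_add_tsum_ite hsum2 a]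
        ring
      have hexp : (v a z * h z)⁻¹ = Q a z + (z - (a : ℂ)) ^ (n a) * W a (n a) z :=
        dslope_expansion (fun w => (v a w * h w)⁻¹) (a : ℂ) (n a) z
      have hG1 : v a z * h z * Q a z + v a z * h z * ((z - (a : ℂ)) ^ (n a) * W a (n a) z)
          = 1 := by
        have h2 : (v a z * h z) * (v a z * h z)⁻¹ = 1 := mul_inv_cancel₀ hvhz
        calc v a z * h z * Q a z + v a z * h z * ((z - (a : ℂ)) ^ (n a) * W a (n a) z)
            = (v a z * h z) * ((v a z * h z)⁻¹) := by rw [hexp]; ring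
        _ = 1 := h2
      have hQv : p a z * f z = Q a z * v a z := by
        simp only [hpdef]
        rw [hfac a z]
        field_simp [pow_ne_zero _ (sub_ne_zero.mpr hza)]
      have hfv := hfac a z
      rw [hbz]
      linear_combination (-(h z)) * hQv - hG1 - (h z * W a (n a) z) * hfv
  choose ε hε Φ hΦdiff hΦkey using hloc
  set g : ℂ → ℂ := fun z => if f z = 0 then
      limUnder (𝓝[≠] z) (fun w => (1 - b w * h w) / f w) else (1 - b z * h z) / f z with hg
  have hgne : ∀ z, f z ≠ 0 → g z = (1 - b z * h z) / f z := by
    intro z hz; simp only [hg, if_neg hz]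
  have hgA : ∀ a : ↥(f ⁻¹' {0}), Set.EqOn g (Φ a) (ball (a : ℂ) (ε a)) := by
    intro a z hzball
    by_cases hza : z = (a : ℂ)
    · have hfz0 : f z = 0 := by rw [hza]; exact a.2
      have hmem : (a : ℂ) ∈ ball (a : ℂ) (ε a) := mem_ball_self (hε a)
      have hballz : ball ((a : ℂ)) (ε a) ∈ 𝓝 z := by
        rw [hza]; exact isOpen_ball.mem_nhds hmem
      have hev : (fun w => (1 - b w * h w) / f w) =ᶠ[𝓝[≠] z] Φ a := by
        filter_upwards [nhdsWithin_le_nhds hballz, self_mem_nhdsWithin] with w hw1 hw2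
        have hw2' : w ≠ (a : ℂ) := by
          simp only [mem_compl_iff, mem_singleton_iff] at hw2
          rw [← hza]; exact hw2
        obtain ⟨hfw, hkey⟩ := hΦkey a w hw1 hw2'
        rw [hkey]
        field_simp
      have hΦc : ContinuousAt (Φ a) z := by
        have hd := (hΦdiff a).differentiableAt (isOpen_ball.mem_nhds hmem)
        rw [hza]; exact hd.continuousAt
      have htd : Filter.Tendsto (fun w => (1 - b w * h w) / f w) (𝓝[≠] z) (𝓝 (Φ a z)) :=
        (hΦc.tendsto.mono_left nhdsWithin_le_nhds).congr' hev.symm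
      have hgz : g z = limUnder (𝓝[≠] z) (fun w => (1 - b w * h w) / f w) := by
        simp only [hg, if_pos hfz0]
      rw [hgz]
      exact (htd.limUnder_eq).symm ▸ rfl
    · obtain ⟨hfz, hkey⟩ := hΦkey a z hzball hza
      rw [hgne z hfz, hkey]
      field_simp
  have hgdiff : Differentiable ℂ g := by
    intro z₀
    by_cases hz₀ : f z₀ = 0
    · set a : ↥(f ⁻¹' {0}) := ⟨z₀, hz₀⟩ with ha
      have hball : ball ((a : ℂ)) (ε a) ∈ 𝓝 z₀ := isOpen_ball.mem_nhds (mem_ball_self (hε a))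
      have heq : g =ᶠ[𝓝 z₀] Φ a := by
        filter_upwards [hball] with w hw
        exact hgA a hw
      exact (heq.differentiableAt_iff).mpr ((hΦdiff a).differentiableAt hball)
    · have hev : ∀ᶠ w in 𝓝 z₀, f w ≠ 0 := hf.continuous.continuousAt.eventually_ne hz₀
      have heq : g =ᶠ[𝓝 z₀] fun w => (1 - b w * h w) / f w := by
        filter_upwards [hev] with w hw
        exact hgne w hw
      refine (heq.differentiableAt_iff).mpr ?_
      exact ((differentiable_const 1).sub (hbdiff.mul hh)).differentiableAt.div
        hf.differentiableAt hz₀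
  refine ⟨g, b, hgdiff, hbdiff, fun z => ?_⟩
  by_cases hfz : f z = 0
  · set a : ↥(f ⁻¹' {0}) := ⟨z, hfz⟩ with ha
    have h1 : Filter.Tendsto (fun w => 1 - b w * h w) (𝓝[≠] z) (𝓝 (1 - b z * h z)) :=
      ((continuous_const.sub (hbdiff.continuous.mul hh.continuous)).tendsto z).mono_left
        nhdsWithin_le_nhds
    have h2 : Filter.Tendsto (fun w => 1 - b w * h w) (𝓝[≠] z) (𝓝 0) := by
      have hballz : ball ((a : ℂ)) (ε a) ∈ 𝓝[≠] z :=
        nhdsWithin_le_nhds (isOpen_ball.mem_nhds (mem_ball_self (hε a)))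
      have hev : (fun w => 1 - b w * h w) =ᶠ[𝓝[≠] z] fun w => Φ a w * f w := by
        filter_upwards [hballz, self_mem_nhdsWithin] with w hw1 hw2
        have hw2' : w ≠ (a : ℂ) := by
          simpa only [mem_compl_iff, mem_singleton_iff] using hw2
        exact (hΦkey a w hw1 hw2').2
      have hΦc : ContinuousAt (Φ a) z :=
        ((hΦdiff a).differentiableAt
          (isOpen_ball.mem_nhds (mem_ball_self (hε a)))).continuousAt
      have htd : Filter.Tendsto (fun w => Φ a w * f w) (𝓝[≠] z) (𝓝 (Φ a z * f z)) :=
        ((hΦc.mul hf.continuous.continuousAt).tendsto.mono_left nhdsWithin_le_nhds)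
      rw [hfz, mul_zero] at htd
      exact htd.congr' hev.symm
    have h3 : 1 - b z * h z = 0 := tendsto_nhds_unique h1 h2
    rw [hfz, mul_zero, zero_add]
    linear_combination -h3
  · rw [hgne z hfz]
    field_simp
    ring

lemma complex_uncountable_aux : Uncountable ℂ := Complex.ofReal_injective.uncountable

end

/-- Wedderburn's theorem: entire functions `f₁, …, f_N` on `ℂ` with no common zero
satisfy a Bézout equation `∑ j, g j * f j = 1` with entire `g j`. -/
theorem wedderburn_one_variable (N : ℕ) (f : Fin N → ℂ → ℂ)
    (hf : ∀ j, Differentiable ℂ (f j)) (hz : ∀ z : ℂ, ∃ j, f j z ≠ 0) :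
    ∃ g : Fin N → ℂ → ℂ, (∀ j, Differentiable ℂ (g j)) ∧ ∀ z : ℂ, ∑ j, g j z * f j z = 1 := by
  classical
  haveI : Uncountable ℂ := complex_uncountable_aux
  obtain ⟨j₀, hj₀⟩ := hz 0
  set F : ℂ → ℂ := f j₀ with hF
  have hFne : ∃ w, F w ≠ 0 := ⟨0, hj₀⟩
  have hFdiff : Differentiable ℂ F := hf j₀
  -- countable set of "bad" parameters t
  have hAcnt : (F ⁻¹' {0}).Countable := zeros_countable hFdiff hFne
  set P : ℂ → Polynomial ℂ := fun a => ∑ j : Fin N,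
    if j = j₀ then 0 else Polynomial.C (f j a) * Polynomial.X ^ ((j : ℕ) + 1) with hP
  have hPne : ∀ a ∈ F ⁻¹' {0}, P a ≠ 0 := by
    intro a ha
    obtain ⟨j₁, hj₁⟩ := hz a
    have hj₁0 : j₁ ≠ j₀ := by
      intro hje
      rw [hje] at hj₁
      exact hj₁ ha
    intro hP0
    have hcoeff : (P a).coeff ((j₁ : ℕ) + 1) = f j₁ a := by
      simp only [hP, Polynomial.finset_sum_coeff]
      rw [Finset.sum_eq_single j₁]
      · rw [if_neg hj₁0, Polynomial.coeff_C_mul, Polynomial.coeff_X_pow, if_pos rfl, mul_one]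
      · intro j _ hjne
        by_cases hjj : j = j₀
        · simp [hjj]
        · rw [if_neg hjj, Polynomial.coeff_C_mul, Polynomial.coeff_X_pow, if_neg
            (fun hc => hjne (Fin.ext (Nat.succ_injective hc)).symm), mul_zero]
      · intro hmem
        exact absurd (Finset.mem_univ j₁) hmem
    rw [hP0, Polynomial.coeff_zero] at hcoeff
    exact hj₁ hcoeff.symm
  have hbadcnt : (⋃ a ∈ F ⁻¹' {0}, {t : ℂ | (P a).eval t = 0}).Countable := by
    refine Set.Countable.biUnion hAcnt fun a ha => ?_
    exact ((P a).finite_setOf_isRoot (hPne a ha)).countable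
  obtain ⟨t, ht⟩ : ∃ t : ℂ, t ∉ ⋃ a ∈ F ⁻¹' {0}, {s : ℂ | (P a).eval s = 0} := by
    by_contra hc
    push_neg at hc
    exact Set.not_countable_univ (hbadcnt.mono fun x _ => hc x)
  set H : ℂ → ℂ := fun z => ∑ j : Fin N, if j = j₀ then 0 else t ^ ((j : ℕ) + 1) * f j z with hH
  have hHdiff : Differentiable ℂ H := by
    apply Differentiable.fun_sum
    intro j _
    by_cases hj : j = j₀
    · simp only [hj, if_pos]
      exact differentiable_const 0
    · simp only [if_neg hj]
      exact (differentiable_const _).mul (hf j)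
  have hHa : ∀ a, F a = 0 → H a ≠ 0 := by
    intro a ha
    have hteval : H a = (P a).eval t := by
      simp only [hH, hP, Polynomial.eval_finset_sum]
      refine Finset.sum_congr rfl fun j _ => ?_
      by_cases hj : j = j₀
      · simp [hj]
      · simp only [if_neg hj, Polynomial.eval_mul, Polynomial.eval_C, Polynomial.eval_pow,
          Polynomial.eval_X]
        ring
    rw [hteval]
    intro he
    exact ht (Set.mem_biUnion ha he)
  obtain ⟨α, β, hα, hβ, hsum⟩ := bezout_two hFdiff hHdiff hFne hHa
  refine ⟨fun j => if j = j₀ then α else fun z => t ^ ((j : ℕ) + 1) * β z, fun j => ?_, fun z => ?_⟩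
  · by_cases hj : j = j₀
    · simp only [hj, if_pos]
      exact hα
    · simp only [if_neg hj]
      exact (differentiable_const _).mul hβ
  · have hco : ∀ j : Fin N, (if j = j₀ then α else fun z => t ^ ((j : ℕ) + 1) * β z) z * f j z
        = (if j = j₀ then α z * F z else 0)
          + β z * (if j = j₀ then 0 else t ^ ((j : ℕ) + 1) * f j z) := by
      intro j
      by_cases hj : j = j₀
      · simp [hj, hF]
      · simp only [if_neg hj]
        ring
    rw [Finset.sum_congr rfl fun j _ => hco j, Finset.sum_add_distrib, ← Finset.mul_sum,
      Finset.sum_ite_eq' Finset.univ j₀ (fun _ => α z * F z)]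
    simp only [Finset.mem_univ, if_pos]
    exact hsum z
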